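/- Let (X,Y) and (X',Y') be random vectors with copulas C and C' respectively, where F_X, F_{X'}, F_Y, F_{Y'} are all continuous and F_Y = F_{Y'}. If CoVaR_{α,β}(Y|X) ≤ CoVaR_{α,β}(Y'|X') for all α, β ∈ (0,1), then C(u,v) ≤ C'(u,v) for all u,v ∈ (0,1). -/

import Mathlib

open MeasureTheory Set ProbabilityTheory Filter Topology

/-- Generalized inverse (left-continuous quantile function) F^←(p) = inf {x : F x ≥ p}. -/
noncomputable def qf (F : ℝ → ℝ) (p : ℝ) : ℝ := sInf {x | p ≤ F x}

/-- Distribution function of a random variable. -/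
noncomputable def rvCdf {Ω : Type*} [MeasurableSpace Ω] (μ : Measure Ω) (X : Ω → ℝ) (x : ℝ) : ℝ :=
  (μ {ω | X ω ≤ x}).toReal

/-- CoVaR_{α,β}(Y|X): β-quantile of the conditional law of Y given {X ≥ VaR_α(X)}. -/
noncomputable def covar {Ω : Type*} [MeasurableSpace Ω] (μ : Measure Ω) (X Y : Ω → ℝ)
    (α β : ℝ) : ℝ :=
  qf (fun y => (μ ({ω | Y ω ≤ y} ∩ {ω | qf (rvCdf μ X) α ≤ X ω})).toReal /
        (μ {ω | qf (rvCdf μ X) α ≤ X ω}).toReal) β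

section helpers
variable {Ω : Type*} [MeasurableSpace Ω] (μ : Measure Ω) [IsProbabilityMeasure μ] {X : Ω → ℝ}

lemma rvCdf_eq_cdf_map (hX : Measurable X) :
    rvCdf μ X = fun x => cdf (μ.map X) x := by
  have : IsProbabilityMeasure (μ.map X) := Measure.isProbabilityMeasure_map hX.aemeasurable
  funext x
  rw [cdf_eq_real, measureReal_def, rvCdf, Measure.map_apply hX measurableSet_Iic]
  rfl

lemma rvCdf_mono : Monotone (rvCdf μ X) := fun a b h =>
  ENNReal.toReal_mono (measure_ne_top _ _)
    (measure_mono fun ω hω => le_trans hω h)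

lemma rvCdf_tendsto_atTop (hX : Measurable X) : Tendsto (rvCdf μ X) atTop (𝓝 1) := by
  rw [rvCdf_eq_cdf_map μ hX]; exact tendsto_cdf_atTop _

lemma rvCdf_tendsto_atBot (hX : Measurable X) : Tendsto (rvCdf μ X) atBot (𝓝 0) := by
  rw [rvCdf_eq_cdf_map μ hX]; exact tendsto_cdf_atBot _

lemma rvCdf_atom_zero (hX : Measurable X) (hc : Continuous (rvCdf μ X)) (a : ℝ) :
    μ {ω | X ω = a} = 0 := by
  have : IsProbabilityMeasure (μ.map X) := Measure.isProbabilityMeasure_map hX.aemeasurable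
  have hcdf : Continuous (fun x => cdf (μ.map X) x) := by rw [← rvCdf_eq_cdf_map μ hX]; exact hc
  have h1 : μ.map X {a} = 0 := by
    conv_lhs => rw [← measure_cdf (μ.map X)]
    rw [StieltjesFunction.measure_singleton]
    have hll : Function.leftLim (fun x => cdf (μ.map X) x) a = cdf (μ.map X) a :=
      leftLim_eq_of_tendsto
        ((hcdf.tendsto a).mono_left nhdsWithin_le_nhds)
    have hll' : Function.leftLim (⇑(cdf (μ.map X))) a = cdf (μ.map X) a := hll
    rw [hll', sub_self, ENNReal.ofReal_zero]
  have : {ω | X ω = a} = X ⁻¹' {a} := rfl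
  rw [this, ← Measure.map_apply hX (measurableSet_singleton a), h1]

lemma exists_rvCdf_eq (hX : Measurable X) (hc : Continuous (rvCdf μ X)) {p : ℝ}
    (hp : p ∈ Ioo (0:ℝ) 1) : ∃ x, rvCdf μ X x = p := by
  obtain ⟨a, ha⟩ := ((rvCdf_tendsto_atBot μ hX).eventually_lt_const hp.1).exists
  obtain ⟨b, hb⟩ := ((rvCdf_tendsto_atTop μ hX).eventually_const_lt hp.2).exists
  have hmem : p ∈ uIcc (rvCdf μ X a) (rvCdf μ X b) := by
    rw [mem_uIcc]; left; exact ⟨ha.le, hb.le⟩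
  obtain ⟨x, _, hx⟩ := intermediate_value_uIcc (f := rvCdf μ X) hc.continuousOn hmem
  exact ⟨x, hx⟩

end helpers

section qfsec
variable {F : ℝ → ℝ}

lemma bddBelow_qfSet (hm : Monotone F) {p a : ℝ} (ha : F a < p) :
    BddBelow {x | p ≤ F x} :=
  ⟨a, fun x hx => le_of_not_gt fun h => absurd hx (not_le.2 (lt_of_le_of_lt (hm h.le) ha))⟩

lemma qf_eval (hm : Monotone F) (hc : Continuous F) {p a b : ℝ}
    (ha : F a < p) (hb : F b = p) : F (qf F p) = p := by
  have hbm : b ∈ {x | p ≤ F x} := le_of_eq hb.symm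
  have hcl : IsClosed {x | p ≤ F x} := isClosed_Ici.preimage hc
  have h1 : p ≤ F (qf F p) :=
    hcl.csInf_mem ⟨b, hbm⟩ (bddBelow_qfSet hm ha)
  have h2 : qf F p ≤ b := csInf_le (bddBelow_qfSet hm ha) hbm
  have := hm h2
  rw [hb] at this
  exact le_antisymm this h1

end qfsec

lemma cond_facts {Ω : Type*} [MeasurableSpace Ω] (μ : Measure Ω) [IsProbabilityMeasure μ]
    (X Y : Ω → ℝ) (hX : Measurable X) (hY : Measurable Y)
    (C : ℝ → ℝ → ℝ)
    (hSklar : ∀ x y, (μ {ω | X ω ≤ x ∧ Y ω ≤ y}).toReal = C (rvCdf μ X x) (rvCdf μ Y y))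
    (hFXcont : Continuous (rvCdf μ X))
    {u : ℝ} (hu : u ∈ Ioo (0:ℝ) 1) :
    rvCdf μ X (qf (rvCdf μ X) u) = u ∧
    (μ {ω | qf (rvCdf μ X) u ≤ X ω}).toReal = 1 - u ∧
    (∀ y, C u (rvCdf μ Y y) = (μ {ω | X ω ≤ qf (rvCdf μ X) u ∧ Y ω ≤ y}).toReal) ∧
    (∀ y, (μ ({ω | Y ω ≤ y} ∩ {ω | qf (rvCdf μ X) u ≤ X ω})).toReal
        = rvCdf μ Y y - C u (rvCdf μ Y y)) := by
  obtain ⟨a, ha⟩ := ((rvCdf_tendsto_atBot μ hX).eventually_lt_const hu.1).exists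
  obtain ⟨b, hb⟩ := exists_rvCdf_eq μ hX hFXcont hu
  set xu := qf (rvCdf μ X) u with hxudef
  have hxu : rvCdf μ X xu = u := qf_eval (rvCdf_mono μ) hFXcont ha hb
  have hxu' : (μ {ω | X ω ≤ xu}).toReal = u := hxu
  have hatom : μ {ω | X ω = xu} = 0 := rvCdf_atom_zero μ hX hFXcont xu
  have hae : {ω | X ω < xu} =ᵐ[μ] {ω | X ω ≤ xu} := by
    rw [MeasureTheory.ae_eq_set]
    constructor
    · refine measure_mono_null (fun ω hω => ?_) hatom
      simp only [mem_diff, mem_setOf_eq] at hω ⊢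
      exact absurd hω.1.le hω.2
    · refine measure_mono_null (fun ω hω => ?_) hatom
      simp only [mem_diff, mem_setOf_eq] at hω ⊢
      exact le_antisymm hω.1 (not_lt.1 hω.2)
  have hlt_le : μ {ω | X ω < xu} = μ {ω | X ω ≤ xu} := measure_congr hae
  have hcompl : {ω | xu ≤ X ω} = {ω | X ω < xu}ᶜ := by ext ω; simp [not_lt]
  have hden : (μ {ω | xu ≤ X ω}).toReal = 1 - u := by
    rw [hcompl, measure_compl (show MeasurableSet {ω | X ω < xu} from hX measurableSet_Iio) (measure_ne_top _ _), hlt_le, measure_univ,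
      ENNReal.toReal_sub_of_le prob_le_one (by simp), ENNReal.toReal_one, hxu']
  have hCf : ∀ y, C u (rvCdf μ Y y) = (μ {ω | X ω ≤ xu ∧ Y ω ≤ y}).toReal := by
    intro y
    rw [← hxu]
    exact (hSklar xu y).symm
  refine ⟨hxu, hden, hCf, fun y => ?_⟩
  have hdiff : {ω | Y ω ≤ y} ∩ {ω | xu ≤ X ω} = {ω | Y ω ≤ y} \ {ω | X ω < xu} := by
    rw [diff_eq, ← hcompl]
  have hsplit : μ (({ω | Y ω ≤ y} : Set Ω) ∩ {ω | X ω < xu}) + μ ({ω | Y ω ≤ y} \ {ω | X ω < xu})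
      = μ {ω | Y ω ≤ y} :=
    measure_inter_add_diff {ω | Y ω ≤ y} (show MeasurableSet {ω | X ω < xu} from hX measurableSet_Iio)
  have t1 : (μ ({ω | Y ω ≤ y} ∩ {ω | X ω < xu})).toReal
      + (μ ({ω | Y ω ≤ y} ∩ {ω | xu ≤ X ω})).toReal = (μ {ω | Y ω ≤ y}).toReal := by
    rw [hdiff, ← ENNReal.toReal_add (measure_ne_top _ _) (measure_ne_top _ _), hsplit]
  have hae2 : ({ω | Y ω ≤ y} ∩ {ω | X ω < xu} : Set Ω) =ᵐ[μ] ({ω | Y ω ≤ y} ∩ {ω | X ω ≤ xu} : Set Ω) :=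
    (Filter.EventuallyEq.refl _ _).inter hae
  have h2 : μ ({ω | Y ω ≤ y} ∩ {ω | X ω ≤ xu}) = μ {ω | X ω ≤ xu ∧ Y ω ≤ y} := by
    congr 1
    ext ω
    simp [mem_setOf_eq, and_comm]
  have t2 : (μ ({ω | Y ω ≤ y} ∩ {ω | X ω < xu})).toReal = C u (rvCdf μ Y y) := by
    rw [measure_congr hae2, h2, hCf y]
  have t3 : (μ {ω | Y ω ≤ y}).toReal = rvCdf μ Y y := rfl
  linarith


/-- if all margins are continuous, F_Y = F_{Y'}, and
CoVaR_{α,β}(Y|X) ≤ CoVaR_{α,β}(Y'|X') for all α,β ∈ (0,1), then C ⪯ C' on (0,1)². -/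
theorem concordance_of_covar_mono
    {Ω Ω' : Type*} [MeasurableSpace Ω] [MeasurableSpace Ω']
    (μ : Measure Ω) (ν : Measure Ω') [IsProbabilityMeasure μ] [IsProbabilityMeasure ν]
    (X Y : Ω → ℝ) (X' Y' : Ω' → ℝ)
    (hX : Measurable X) (hY : Measurable Y) (hX' : Measurable X') (hY' : Measurable Y')
    (C C' : ℝ → ℝ → ℝ)
    (hSklar : ∀ x y, (μ {ω | X ω ≤ x ∧ Y ω ≤ y}).toReal = C (rvCdf μ X x) (rvCdf μ Y y))
    (hSklar' : ∀ x y, (ν {ω | X' ω ≤ x ∧ Y' ω ≤ y}).toReal =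
      C' (rvCdf ν X' x) (rvCdf ν Y' y))
    (hFXcont : Continuous (rvCdf μ X)) (hFX'cont : Continuous (rvCdf ν X'))
    (hFYcont : Continuous (rvCdf μ Y)) (hFY'cont : Continuous (rvCdf ν Y'))
    (hYY' : rvCdf μ Y = rvCdf ν Y')
    (hcovar : ∀ α ∈ Ioo (0:ℝ) 1, ∀ β ∈ Ioo (0:ℝ) 1,
      covar μ X Y α β ≤ covar ν X' Y' α β) :
    ∀ u ∈ Ioo (0:ℝ) 1, ∀ v ∈ Ioo (0:ℝ) 1, C u v ≤ C' u v := by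
  intro u hu v hv
  by_contra hcon
  push_neg at hcon
  obtain ⟨hxu, hden, hCf, hnum⟩ := cond_facts μ X Y hX hY C hSklar hFXcont hu
  obtain ⟨hxu', hden', hCf', hnum'⟩ := cond_facts ν X' Y' hX' hY' C' hSklar' hFX'cont hu
  rw [← hYY'] at hCf' hnum'
  obtain ⟨yv, hyv⟩ := exists_rvCdf_eq μ hY hFYcont hv
  have h1u : (0:ℝ) < 1 - u := by linarith [hu.2]
  set xu := qf (rvCdf μ X) u with hxudef
  set xu' := qf (rvCdf ν X') u with hxudef'
  set G : ℝ → ℝ := fun y =>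
    (μ ({ω | Y ω ≤ y} ∩ {ω | xu ≤ X ω})).toReal / (μ {ω | xu ≤ X ω}).toReal with hG
  set G' : ℝ → ℝ := fun y =>
    (ν ({ω | Y' ω ≤ y} ∩ {ω | xu' ≤ X' ω})).toReal / (ν {ω | xu' ≤ X' ω}).toReal with hG'
  have hGeq : ∀ y, G y = (rvCdf μ Y y - C u (rvCdf μ Y y)) / (1 - u) := by
    intro y
    rw [hG]
    simp only
    rw [hnum y, hden]
  have hG'eq : ∀ y, G' y = (rvCdf μ Y y - C' u (rvCdf μ Y y)) / (1 - u) := by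
    intro y
    rw [hG']
    simp only
    rw [hnum' y, hden']
  have hcovG : ∀ β, covar μ X Y u β = sInf {x | β ≤ G x} := by
    intro β
    rw [hG]
    rfl
  have hcovG' : ∀ β, covar ν X' Y' u β = sInf {x | β ≤ G' x} := by
    intro β
    rw [hG']
    rfl
  -- values at yv
  have hCv : C u v = (μ {ω | X ω ≤ xu ∧ Y ω ≤ yv}).toReal := by rw [← hyv, hCf yv]
  have hC'v : C' u v = (ν {ω | X' ω ≤ xu' ∧ Y' ω ≤ yv}).toReal := by rw [← hyv, hCf' yv]
  have hC0 : 0 ≤ C u v := hCv ▸ ENNReal.toReal_nonneg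
  have hC'0 : 0 ≤ C' u v := hC'v ▸ ENNReal.toReal_nonneg
  have hCle : C u v ≤ v := by
    rw [hCv, ← hyv]
    exact ENNReal.toReal_mono (measure_ne_top _ _) (measure_mono fun ω h => h.2)
  have hnum'le : v - C' u v ≤ 1 - u := by
    have h := hnum' yv
    rw [hyv] at h
    rw [← h, ← hden']
    exact ENNReal.toReal_mono (measure_ne_top _ _) (measure_mono inter_subset_right)
  set gm : ℝ := (v - C u v) / (1 - u) with hgm
  set gn : ℝ := (v - C' u v) / (1 - u) with hgn
  have hgm0 : 0 ≤ gm := div_nonneg (by linarith) h1u.le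
  have hgn1 : gn ≤ 1 := by rw [hgn, div_le_one h1u]; linarith
  have hltg : gm < gn := by
    rw [hgm, hgn, div_lt_div_iff_of_pos_right h1u]
    linarith
  set β : ℝ := (gm + gn) / 2 with hβ
  have hβmem : β ∈ Ioo (0:ℝ) 1 := ⟨by rw [hβ]; linarith, by rw [hβ]; linarith⟩
  have hβgm : gm < β := by rw [hβ]; linarith
  have hβgn : β < gn := by rw [hβ]; linarith
  -- monotonicity
  have hGmono : Monotone G := by
    intro y1 y2 h12
    rw [hG]
    simp only
    apply div_le_div_of_nonneg_right ?_ ?_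
    · exact ENNReal.toReal_mono (measure_ne_top _ _)
        (measure_mono (inter_subset_inter_left _ fun ω (hω : Y ω ≤ y1) => hω.trans h12))
    · exact ENNReal.toReal_nonneg
  have hG'mono : Monotone G' := by
    intro y1 y2 h12
    rw [hG']
    simp only
    apply div_le_div_of_nonneg_right ?_ ?_
    · exact ENNReal.toReal_mono (measure_ne_top _ _)
        (measure_mono (inter_subset_inter_left _ fun ω (hω : Y' ω ≤ y1) => hω.trans h12))
    · exact ENNReal.toReal_nonneg
  -- (1) covar ν ≤ yv
  have hG'yv : β ≤ G' yv := by
    rw [hG'eq yv, hyv]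
    exact le_of_lt hβgn
  have hbdd' : BddBelow {x | β ≤ G' x} := by
    obtain ⟨a, ha⟩ := ((rvCdf_tendsto_atBot μ hY).eventually_lt_const
      (mul_pos hβmem.1 h1u)).exists
    have hC'a : 0 ≤ C' u (rvCdf μ Y a) := by rw [hCf' a]; exact ENNReal.toReal_nonneg
    have hG'a : G' a < β := by
      rw [hG'eq a, div_lt_iff₀ h1u]
      linarith
    exact ⟨a, fun x hx => le_of_not_gt fun h =>
      absurd hx (not_le.2 (lt_of_le_of_lt (hG'mono h.le) hG'a))⟩
  have h1 : covar ν X' Y' u β ≤ yv := by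
    rw [hcovG' β]
    exact csInf_le hbdd' hG'yv
  -- (2) yv < covar μ
  have hSne : {x | β ≤ G x}.Nonempty := by
    have hlt1 : β * (1 - u) + u < 1 := by nlinarith [hβmem.2, hu.1]
    obtain ⟨y2, hy2⟩ := ((rvCdf_tendsto_atTop μ hY).eventually_const_lt hlt1).exists
    refine ⟨y2, ?_⟩
    have hCu : C u (rvCdf μ Y y2) ≤ u := by
      rw [hCf y2]
      calc (μ {ω | X ω ≤ xu ∧ Y ω ≤ y2}).toReal
          ≤ (μ {ω | X ω ≤ xu}).toReal :=
            ENNReal.toReal_mono (measure_ne_top _ _) (measure_mono fun ω h => h.1)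
        _ = u := hxu
    show β ≤ G y2
    rw [hGeq y2, le_div_iff₀ h1u]
    linarith
  have htv : v - C u v < β * (1 - u) := by
    have := (div_lt_iff₀ h1u).1 hβgm
    linarith
  obtain ⟨y1, hy1gt, hy1lt⟩ : ∃ y1, yv < y1 ∧ rvCdf μ Y y1 < β * (1 - u) + C u v := by
    have hev : ∀ᶠ x in 𝓝 yv, rvCdf μ Y x < β * (1 - u) + C u v :=
      (hFYcont.tendsto yv).eventually_lt_const (by rw [hyv]; linarith)
    have hev2 : ∀ᶠ x in 𝓝[>] yv, yv < x := eventually_mem_nhdsWithin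
    obtain ⟨y1, h1, h2⟩ := ((hev2.and (hev.filter_mono nhdsWithin_le_nhds))).exists
    exact ⟨y1, h1, h2⟩
  have hCmono : C u v ≤ C u (rvCdf μ Y y1) := by
    rw [hCv, hCf y1]
    exact ENNReal.toReal_mono (measure_ne_top _ _)
      (measure_mono fun ω h => ⟨h.1, h.2.trans hy1gt.le⟩)
  have hGy1 : G y1 < β := by
    rw [hGeq y1, div_lt_iff₀ h1u]
    linarith
  have h2 : y1 ≤ covar μ X Y u β := by
    rw [hcovG β]
    exact le_csInf hSne fun x hx => le_of_not_gt fun hlt =>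
      absurd hx (not_le.2 (lt_of_le_of_lt (hGmono hlt.le) hGy1))
  have h3 := hcovar u hu β hβmem
  linarith
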